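/- Let Q be a real symmetric positive definite n×n matrix. The first diagonal Padé approximation R₁(A) = (I - A/2)⁻¹(I + A/2) is globally Lipschitz continuous on g_Q = {A : QA + AᵀQ = 0} with Lipschitz constant 1 with respect to the matrix operator norm induced by the Q-norm. -/

import Mathlib

open Matrix

/-- The `Q`-norm of a vector, `‖x‖_Q = √(xᵀ Q x)`. -/
noncomputable def qnorm {n : ℕ} (Q : Matrix (Fin n) (Fin n) ℝ) (x : Fin n → ℝ) : ℝ :=
  Real.sqrt (x ⬝ᵥ Q.mulVec x)

/-- The operator norm on `ℝ^{n×n}` induced by the `Q`-norm. -/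
noncomputable def qOpNorm {n : ℕ} (Q M : Matrix (Fin n) (Fin n) ℝ) : ℝ :=
  sInf {c : ℝ | 0 ≤ c ∧ ∀ x : Fin n → ℝ, qnorm Q (M.mulVec x) ≤ c * qnorm Q x}

/-- The first diagonal Padé approximant `R₁(A) = (I - A/2)⁻¹ (I + A/2)`. -/
noncomputable def pade1 {n : ℕ} (A : Matrix (Fin n) (Fin n) ℝ) : Matrix (Fin n) (Fin n) ℝ :=
  (1 - (1/2 : ℝ) • A)⁻¹ * (1 + (1/2 : ℝ) • A)

section aux

variable {n : ℕ} {Q : Matrix (Fin n) (Fin n) ℝ}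

lemma qsq_nonneg (hQ : Q.PosDef) (x : Fin n → ℝ) : 0 ≤ x ⬝ᵥ Q.mulVec x := by
  have := hQ.posSemidef.dotProduct_mulVec_nonneg x
  simpa using this

lemma qnorm_nonneg (Q : Matrix (Fin n) (Fin n) ℝ) (x : Fin n → ℝ) : 0 ≤ qnorm Q x :=
  Real.sqrt_nonneg _

/-- cross terms vanish for Q-skew matrices -/
lemma cross_zero {S : Matrix (Fin n) (Fin n) ℝ} (hS : Q * S + Sᵀ * Q = 0)
    (v : Fin n → ℝ) :
    v ⬝ᵥ Q.mulVec (S.mulVec v) + (S.mulVec v) ⬝ᵥ Q.mulVec v = 0 := by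
  have h1 : v ⬝ᵥ Q.mulVec (S.mulVec v) = v ⬝ᵥ (Q * S).mulVec v := by
    rw [Matrix.mulVec_mulVec]
  have h2 : (S.mulVec v) ⬝ᵥ Q.mulVec v = v ⬝ᵥ (Sᵀ * Q).mulVec v := by
    rw [Matrix.dotProduct_mulVec, Matrix.dotProduct_mulVec, ← Matrix.vecMul_vecMul]
    congr 1
    rw [← Matrix.vecMul_transpose]
  rw [h1, h2, ← dotProduct_add, ← Matrix.add_mulVec, hS]
  simp

/-- expansion: `(1 - c•S)` does not decrease the Q-norm when `S` is Q-skew. -/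
lemma qnorm_le_skew {A : Matrix (Fin n) (Fin n) ℝ} (hQ : Q.PosDef)
    (hA : Q * A + Aᵀ * Q = 0) (v : Fin n → ℝ) :
    qnorm Q v ≤ qnorm Q ((1 - (1/2 : ℝ) • A).mulVec v) := by
  apply Real.sqrt_le_sqrt
  set w := ((1/2 : ℝ) • A).mulVec v with hw
  have hexp : (1 - (1/2 : ℝ) • A).mulVec v = v - w := by
    rw [Matrix.sub_mulVec, Matrix.one_mulVec]
  rw [hexp]
  have hcross : v ⬝ᵥ Q.mulVec w + w ⬝ᵥ Q.mulVec v = 0 := by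
    have h : Q * ((1/2 : ℝ) • A) + ((1/2 : ℝ) • A)ᵀ * Q = 0 := by
      rw [Matrix.transpose_smul, Matrix.mul_smul, Matrix.smul_mul, ← smul_add, hA, smul_zero]
    exact cross_zero h v
  have hwq : 0 ≤ w ⬝ᵥ Q.mulVec w := qsq_nonneg hQ w
  have : (v - w) ⬝ᵥ Q.mulVec (v - w)
      = v ⬝ᵥ Q.mulVec v - (v ⬝ᵥ Q.mulVec w + w ⬝ᵥ Q.mulVec v) + w ⬝ᵥ Q.mulVec w := by
    rw [Matrix.mulVec_sub, dotProduct_sub, sub_dotProduct,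
      sub_dotProduct]
    ring
  rw [this, hcross]
  linarith

lemma det_ne_zero_skew {A : Matrix (Fin n) (Fin n) ℝ} (hQ : Q.PosDef)
    (hA : Q * A + Aᵀ * Q = 0) : (1 - (1/2 : ℝ) • A).det ≠ 0 := by
  intro hdet
  obtain ⟨v, hv, hv0⟩ := (Matrix.exists_mulVec_eq_zero_iff).2 hdet
  have h1 := qnorm_le_skew hQ hA v
  rw [hv0] at h1
  have h2 : qnorm Q (0 : Fin n → ℝ) = 0 := by
    simp [qnorm]
  rw [h2] at h1
  have h3 : 0 < v ⬝ᵥ Q.mulVec v := by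
    have := hQ.dotProduct_mulVec_pos hv
    simpa using this
  have h4 : 0 < qnorm Q v := Real.sqrt_pos.2 h3
  linarith

/-- the inverse of `(1 - c•S)` contracts the Q-norm. -/
lemma qnorm_inv_le {A : Matrix (Fin n) (Fin n) ℝ} (hQ : Q.PosDef)
    (hA : Q * A + Aᵀ * Q = 0) (z : Fin n → ℝ) :
    qnorm Q ((1 - (1/2 : ℝ) • A)⁻¹.mulVec z) ≤ qnorm Q z := by
  have hdet := det_ne_zero_skew hQ hA
  have hmul : (1 - (1/2 : ℝ) • A) * (1 - (1/2 : ℝ) • A)⁻¹ = 1 :=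
    Matrix.mul_nonsing_inv _ (by simpa using hdet)
  have := qnorm_le_skew hQ hA ((1 - (1/2 : ℝ) • A)⁻¹.mulVec z)
  rwa [Matrix.mulVec_mulVec, hmul, Matrix.one_mulVec] at this

/-- the key algebraic identity. -/
lemma pade1_sub {A B : Matrix (Fin n) (Fin n) ℝ} (hQ : Q.PosDef)
    (hA : Q * A + Aᵀ * Q = 0) (hB : Q * B + Bᵀ * Q = 0) :
    pade1 A - pade1 B
      = (1 - (1/2 : ℝ) • A)⁻¹ * (A - B) * (1 - (1/2 : ℝ) • B)⁻¹ := by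
  set MA := 1 - (1/2 : ℝ) • A with hMA
  set MB := 1 - (1/2 : ℝ) • B with hMB
  have hdA : IsUnit MA.det := (Ne.isUnit (det_ne_zero_skew hQ hA))
  have hdB : IsUnit MB.det := (Ne.isUnit (det_ne_zero_skew hQ hB))
  have hAinv : MA⁻¹ * MA = 1 := Matrix.nonsing_inv_mul _ hdA
  have hBinv : MB * MB⁻¹ = 1 := Matrix.mul_nonsing_inv _ hdB
  have eA : (1 : Matrix (Fin n) (Fin n) ℝ) + (1/2 : ℝ) • A
      = (2 : ℝ) • (1 : Matrix (Fin n) (Fin n) ℝ) - MA := by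
    rw [hMA]
    ext i j
    simp only [Matrix.add_apply, Matrix.sub_apply, Matrix.smul_apply, Matrix.one_apply,
      smul_eq_mul]
    split_ifs <;> ring
  have eB : (1 : Matrix (Fin n) (Fin n) ℝ) + (1/2 : ℝ) • B
      = (2 : ℝ) • (1 : Matrix (Fin n) (Fin n) ℝ) - MB := by
    rw [hMB]
    ext i j
    simp only [Matrix.add_apply, Matrix.sub_apply, Matrix.smul_apply, Matrix.one_apply,
      smul_eq_mul]
    split_ifs <;> ring
  have h1 : pade1 A = (2 : ℝ) • MA⁻¹ - 1 := by
    rw [pade1, ← hMA, eA, Matrix.mul_sub, mul_smul_comm, Matrix.mul_one, hAinv]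
  have h2 : pade1 B = (2 : ℝ) • MB⁻¹ - 1 := by
    rw [pade1, ← hMB, eB, Matrix.mul_sub, mul_smul_comm, Matrix.mul_one,
      Matrix.nonsing_inv_mul _ hdB]
  have h3 : MA⁻¹ - MB⁻¹ = MA⁻¹ * (MB - MA) * MB⁻¹ := by
    rw [Matrix.mul_sub, Matrix.sub_mul, Matrix.mul_assoc MA⁻¹ MB MB⁻¹, hBinv,
      Matrix.mul_one, hAinv, Matrix.one_mul]
  have h4 : MB - MA = (1/2 : ℝ) • (A - B) := by
    rw [hMA, hMB]
    ext i j
    simp only [Matrix.sub_apply, Matrix.smul_apply, Matrix.one_apply, smul_eq_mul]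
    split_ifs <;> ring
  have h5 : MA⁻¹ * ((1/2 : ℝ) • (A - B)) * MB⁻¹
      = (1/2 : ℝ) • (MA⁻¹ * (A - B) * MB⁻¹) := by
    rw [mul_smul_comm, smul_mul_assoc]
  have h6 : (2 : ℝ) • MA⁻¹ - 1 - ((2 : ℝ) • MB⁻¹ - 1) = (2 : ℝ) • (MA⁻¹ - MB⁻¹) := by
    rw [smul_sub]; abel
  rw [h1, h2, h6, h3, h4, h5, smul_smul]
  norm_num

/-- an abstract bound for linear maps in finite dimension. -/
lemma exists_lin_bound {E : Type*} [NormedAddCommGroup E] [NormedSpace ℝ E]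
    [FiniteDimensional ℝ E] (f : E →ₗ[ℝ] E) :
    ∃ c : ℝ, 0 ≤ c ∧ ∀ x, ‖f x‖ ≤ c * ‖x‖ := by
  refine ⟨‖LinearMap.toContinuousLinearMap f‖, norm_nonneg _, fun x => ?_⟩
  exact (LinearMap.toContinuousLinearMap f).le_opNorm x

/-- Nonemptiness of the defining set. -/
lemma qset_nonempty (hQ : Q.PosDef) (M : Matrix (Fin n) (Fin n) ℝ) :
    ∃ c : ℝ, 0 ≤ c ∧ ∀ x : Fin n → ℝ, qnorm Q (M.mulVec x) ≤ c * qnorm Q x := by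
  letI := Q.toNormedAddCommGroup hQ
  letI := Q.toInnerProductSpace hQ.posSemidef
  obtain ⟨c, hc0, hc⟩ := exists_lin_bound (M.mulVecLin)
  have hn : ∀ y : Fin n → ℝ, @norm _ (Q.toNormedAddCommGroup hQ).toNorm y = qnorm Q y := fun y => by
    unfold qnorm
    exact congrArg Real.sqrt (dotProduct_comm (Q *ᵥ y) y)
  exact ⟨c, hc0, fun x => by have := hc x; rw [hn, hn] at this; exact this⟩

end aux

/-- `R₁` is globally Lipschitz on `g_Q` with Lipschitz constant `1` with respect
to the operator norm induced by the `Q`-norm. -/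
theorem stmt8 {n : ℕ} (Q A B : Matrix (Fin n) (Fin n) ℝ)
    (hQ : Q.PosDef) (hA : Q * A + Aᵀ * Q = 0) (hB : Q * B + Bᵀ * Q = 0) :
    qOpNorm Q (pade1 A - pade1 B) ≤ 1 * qOpNorm Q (A - B) := by
  rw [one_mul]
  set S : Set ℝ := {c : ℝ | 0 ≤ c ∧ ∀ x : Fin n → ℝ, qnorm Q ((A - B).mulVec x) ≤ c * qnorm Q x}
    with hS
  have hSne : S.Nonempty := qset_nonempty hQ (A - B)
  have hSbdd : BddBelow S := ⟨0, fun c hc => hc.1⟩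
  have hSclosed : IsClosed S := by
    have : S = {c : ℝ | 0 ≤ c} ∩ ⋂ x : Fin n → ℝ,
        {c : ℝ | qnorm Q ((A - B).mulVec x) ≤ c * qnorm Q x} := by
      ext c; simp [hS, Set.mem_iInter]
    rw [this]
    exact isClosed_Ici.inter (isClosed_iInter fun x =>
      isClosed_le continuous_const (continuous_id.mul continuous_const))
  have hmem : qOpNorm Q (A - B) ∈ S := hSclosed.csInf_mem hSne hSbdd
  obtain ⟨hc0, hc⟩ := hmem
  apply csInf_le ⟨0, fun c hc => hc.1⟩
  refine ⟨hc0, fun x => ?_⟩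
  rw [pade1_sub hQ hA hB]
  set MAi := (1 - (1/2 : ℝ) • A)⁻¹
  set MBi := (1 - (1/2 : ℝ) • B)⁻¹
  have hstep : (MAi * (A - B) * MBi).mulVec x
      = MAi.mulVec ((A - B).mulVec (MBi.mulVec x)) := by
    rw [← Matrix.mulVec_mulVec, ← Matrix.mulVec_mulVec]
  rw [hstep]
  calc qnorm Q (MAi.mulVec ((A - B).mulVec (MBi.mulVec x)))
      ≤ qnorm Q ((A - B).mulVec (MBi.mulVec x)) := qnorm_inv_le hQ hA _
    _ ≤ qOpNorm Q (A - B) * qnorm Q (MBi.mulVec x) := hc _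
    _ ≤ qOpNorm Q (A - B) * qnorm Q x :=
        mul_le_mul_of_nonneg_left (qnorm_inv_le hQ hB x) hc0
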